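/- Let y > 1, Y = y e^{-y}, and let x ∈ (0,1) solve x - ln x = y - ln y. Define c₂ = 1/e, d₂ = e - 1 - c₂ e = e - 2, and z₂(y) = (1 - d₂Y - √((1 - d₂Y)² - 4c₂Y))/(2c₂Y). Then x < z₂(y)·Y. -/

import Mathlib

open Real Set

noncomputable def Hfun (t : ℝ) : ℝ :=
  t * Real.exp (t - 1) - Real.exp t + 1 + (Real.exp 1 - 2) * t

noncomputable def Hfun' (t : ℝ) : ℝ :=
  Real.exp (t - 1) + t * Real.exp (t - 1) - Real.exp t + (Real.exp 1 - 2)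

lemma Hfun_hasDeriv (t : ℝ) : HasDerivAt Hfun (Hfun' t) t := by
  have h1 : HasDerivAt (fun t : ℝ => t - 1) 1 t := (hasDerivAt_id t).sub_const 1
  have h2 : HasDerivAt (fun t : ℝ => Real.exp (t - 1)) (Real.exp (t - 1)) t := by
    simpa using h1.exp
  have h3 : HasDerivAt (fun t : ℝ => t * Real.exp (t - 1))
      (1 * Real.exp (t - 1) + t * Real.exp (t - 1)) t := (hasDerivAt_id t).mul h2
  have h4 : HasDerivAt (fun t : ℝ => (Real.exp 1 - 2) * t) (Real.exp 1 - 2) t := by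
    simpa using (hasDerivAt_id t).const_mul (Real.exp 1 - 2)
  have h5 := ((h3.sub (Real.hasDerivAt_exp t)).add_const 1).add h4
  refine h5.congr_deriv ?_
  unfold Hfun'; ring

lemma Hfun'_hasDeriv (t : ℝ) :
    HasDerivAt Hfun' (Real.exp (t - 1) * (t + 2) - Real.exp t) t := by
  have h1 : HasDerivAt (fun t : ℝ => t - 1) 1 t := (hasDerivAt_id t).sub_const 1
  have h2 : HasDerivAt (fun t : ℝ => Real.exp (t - 1)) (Real.exp (t - 1)) t := by
    simpa using h1.exp
  have h3 : HasDerivAt (fun t : ℝ => t * Real.exp (t - 1))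
      (1 * Real.exp (t - 1) + t * Real.exp (t - 1)) t := (hasDerivAt_id t).mul h2
  have h5 := ((h2.add h3).sub (Real.hasDerivAt_exp t)).add_const (Real.exp 1 - 2)
  refine h5.congr_deriv ?_
  ring

lemma Hfun_cont : Continuous Hfun :=
  continuous_iff_continuousAt.mpr fun t => (Hfun_hasDeriv t).continuousAt

lemma Hfun'_cont : Continuous Hfun' :=
  continuous_iff_continuousAt.mpr fun t => (Hfun'_hasDeriv t).continuousAt

lemma Hfun_deriv (t : ℝ) : deriv Hfun t = Hfun' t := (Hfun_hasDeriv t).deriv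

lemma H0 : Hfun 0 = 0 := by
  unfold Hfun
  simp [Real.exp_neg]

lemma H1 : Hfun 1 = 0 := by unfold Hfun; simp; ring

lemma H'1 : Hfun' 1 = 0 := by unfold Hfun'; simp; ring

lemma e_gt : (2.71 : ℝ) < Real.exp 1 := by nlinarith [Real.exp_one_gt_d9]
lemma e_lt : Real.exp 1 < 2.72 := by nlinarith [Real.exp_one_lt_d9]

lemma exp_shift (t : ℝ) : Real.exp t = Real.exp (t - 1) * Real.exp 1 := by
  rw [← Real.exp_add]; ring_nf

lemma H'0_pos : 0 < Hfun' 0 := by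
  unfold Hfun'
  have hE : Real.exp ((0:ℝ) - 1) * Real.exp 1 = 1 := by
    rw [← Real.exp_add]; norm_num
  have h3 : (0:ℝ) < Real.exp ((0:ℝ) - 1) := Real.exp_pos _
  have h1 := e_gt
  have h2 := e_lt
  have h0 : Real.exp (0:ℝ) = 1 := Real.exp_zero
  nlinarith [hE]

lemma H'e2_neg : Hfun' (Real.exp 1 - 2) < 0 := by
  unfold Hfun'
  have key : (Real.exp 1 - 3) + 1 < Real.exp (Real.exp 1 - 3) := by
    apply Real.add_one_lt_exp
    have := e_lt; intro h; nlinarith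
  have h1 : Real.exp 1 - 2 - 1 = Real.exp 1 - 3 := by ring
  rw [h1]
  rw [exp_shift (Real.exp 1 - 2), h1]
  nlinarith [Real.exp_pos (Real.exp 1 - 3)]

lemma Hfun_pos {x : ℝ} (hx0 : 0 < x) (hx1 : x < 1) : 0 < Hfun x := by
  have hE1 := e_gt
  have hE2 := e_lt
  have he2pos : (0:ℝ) < Real.exp 1 - 2 := by linarith
  have he2lt : Real.exp 1 - 2 < 1 := by linarith
  -- H'' sign
  have hanti : StrictAntiOn Hfun' (Icc 0 (Real.exp 1 - 2)) := by
    apply strictAntiOn_of_deriv_neg (convex_Icc _ _) Hfun'_cont.continuousOn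
    intro t ht
    rw [interior_Icc] at ht
    rw [(Hfun'_hasDeriv t).deriv, exp_shift t]
    have : t + 2 < Real.exp 1 := by linarith [ht.2]
    nlinarith [Real.exp_pos (t - 1)]
  have hmono : StrictMonoOn Hfun' (Icc (Real.exp 1 - 2) 1) := by
    apply strictMonoOn_of_deriv_pos (convex_Icc _ _) Hfun'_cont.continuousOn
    intro t ht
    rw [interior_Icc] at ht
    rw [(Hfun'_hasDeriv t).deriv, exp_shift t]
    have : Real.exp 1 < t + 2 := by linarith [ht.1]
    nlinarith [Real.exp_pos (t - 1)]
  -- root a of H' in (0, e-2)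
  obtain ⟨a, ha, haz⟩ : ∃ a ∈ Ioo (0:ℝ) (Real.exp 1 - 2), Hfun' a = 0 := by
    have hsub := intermediate_value_Ioo' (le_of_lt he2pos)
      (Hfun'_cont.continuousOn (s := Icc 0 (Real.exp 1 - 2)))
    have h0mem : (0:ℝ) ∈ Ioo (Hfun' (Real.exp 1 - 2)) (Hfun' 0) := ⟨H'e2_neg, H'0_pos⟩
    obtain ⟨a, ha, haz⟩ := hsub h0mem
    exact ⟨a, ha, haz⟩
  have ha0 : 0 < a := ha.1
  have hae : a < Real.exp 1 - 2 := ha.2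
  have ha1 : a < 1 := by linarith
  -- sign of H' on (0,a) and (a,1)
  have hpos' : ∀ t ∈ Ioo 0 a, 0 < Hfun' t := by
    intro t ht
    have := hanti ⟨le_of_lt ht.1, by linarith [ht.2]⟩ ⟨le_of_lt ha0, le_of_lt hae⟩ ht.2
    rw [haz] at this; exact this
  have hneg' : ∀ t ∈ Ioo a 1, Hfun' t < 0 := by
    intro t ht
    rcases le_or_gt t (Real.exp 1 - 2) with h | h
    · have := hanti ⟨le_of_lt ha0, le_of_lt hae⟩ ⟨by linarith [ht.1], h⟩ ht.1
      rw [haz] at this; exact this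
    · have := hmono ⟨le_of_lt h, le_of_lt ht.2⟩ ⟨le_refl _ |>.trans (by linarith), le_refl 1⟩ ht.2
      rw [H'1] at this; exact this
  have hHmono : StrictMonoOn Hfun (Icc 0 a) := by
    apply strictMonoOn_of_deriv_pos (convex_Icc _ _) Hfun_cont.continuousOn
    intro t ht
    rw [interior_Icc] at ht
    rw [Hfun_deriv]
    exact hpos' t ht
  have hHanti : StrictAntiOn Hfun (Icc a 1) := by
    apply strictAntiOn_of_deriv_neg (convex_Icc _ _) Hfun_cont.continuousOn
    intro t ht
    rw [interior_Icc] at ht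
    rw [Hfun_deriv]
    exact hneg' t ht
  rcases le_or_gt x a with h | h
  · have := hHmono ⟨le_refl 0, le_of_lt ha0⟩ ⟨le_of_lt hx0, h⟩ hx0
    rwa [H0] at this
  · have := hHanti ⟨le_of_lt h, le_of_lt hx1⟩ ⟨le_of_lt ha1, le_refl 1⟩ hx1
    rwa [H1] at this

theorem x_lt_z2_mul_Y
    (y x : ℝ) (hy : 1 < y) (hx : x ∈ Set.Ioo (0:ℝ) 1)
    (heq : x - Real.log x = y - Real.log y) :
    let Y := y * Real.exp (-y)
    let c₂ := 1 / Real.exp 1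
    let d₂ := Real.exp 1 - 2
    x < ((1 - d₂ * Y - Real.sqrt ((1 - d₂ * Y)^2 - 4 * c₂ * Y)) / (2 * c₂ * Y)) * Y := by
  intro Y c₂ d₂
  obtain ⟨hx0, hx1⟩ := hx
  have hy0 : (0:ℝ) < y := by linarith
  have hc₂def : c₂ = 1 / Real.exp 1 := rfl
  have hd₂def : d₂ = Real.exp 1 - 2 := rfl
  have hYdef : Y = y * Real.exp (-y) := rfl
  have hc₂ : 0 < c₂ := by rw [hc₂def]; positivity
  have hd₂ : 0 < d₂ := by rw [hd₂def]; linarith [e_gt]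
  have hxy : x * Real.exp (-x) = y * Real.exp (-y) := by
    have h := congrArg Real.exp (show Real.log x + (-x) = Real.log y + (-y) by linarith)
    rwa [Real.exp_add, Real.exp_add, Real.exp_log hx0, Real.exp_log hy0] at h
  have hYx : Y = x * Real.exp (-x) := by rw [hYdef, hxy]
  have hY0 : 0 < Y := by rw [hYx]; positivity
  have hYlt : Y < c₂ := by
    have h1 : y - 1 + 1 < Real.exp (y - 1) := Real.add_one_lt_exp (sub_ne_zero.mpr (ne_of_gt hy))
    have h2 : y * Real.exp (-y) < Real.exp (y - 1) * Real.exp (-y) := by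
      apply mul_lt_mul_of_pos_right (by linarith) (Real.exp_pos _)
    have h3 : Real.exp (y - 1) * Real.exp (-y) = c₂ := by
      rw [← Real.exp_add, show y - 1 + -y = -1 by ring, Real.exp_neg, hc₂def, one_div]
    rw [hYdef]; linarith [h2, h3.symm.le]
  -- quadratic positivity
  have e1 : Real.exp (-x) * Real.exp (x - 1) = c₂ := by
    rw [← Real.exp_add, show -x + (x - 1) = -1 by ring, Real.exp_neg, hc₂def, one_div]
  have e2 : Real.exp (-x) * Real.exp x = 1 := by
    rw [← Real.exp_add]; simp
  have hH := Hfun_pos hx0 hx1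
  have hquad : 0 < c₂ * x^2 - (1 - d₂ * Y) * x + Y := by
    have hid : c₂ * x^2 - (1 - d₂ * Y) * x + Y = x * Real.exp (-x) * Hfun x := by
      rw [hYx, hd₂def]
      unfold Hfun
      linear_combination (-(x^2)) * e1 + x * e2
    rw [hid]
    have := Real.exp_pos (-x)
    positivity
  -- bound on RHS positivity
  have hsum : d₂ * c₂ + 2 * c₂ = 1 := by
    rw [hd₂def, hc₂def]
    field_simp
    ring
  have hrhs : 0 < 1 - d₂ * Y - 2 * c₂ * x := by
    nlinarith [mul_lt_mul_of_pos_left hYlt hd₂, mul_lt_mul_of_pos_left hx1 hc₂]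
  have hS : Real.sqrt ((1 - d₂ * Y)^2 - 4 * c₂ * Y) < 1 - d₂ * Y - 2 * c₂ * x := by
    rw [Real.sqrt_lt' hrhs]
    nlinarith [mul_pos hc₂ hquad]
  have hYne : Y ≠ 0 := ne_of_gt hY0
  have hrw : ((1 - d₂ * Y - Real.sqrt ((1 - d₂ * Y)^2 - 4 * c₂ * Y)) / (2 * c₂ * Y)) * Y
      = (1 - d₂ * Y - Real.sqrt ((1 - d₂ * Y)^2 - 4 * c₂ * Y)) / (2 * c₂) := by
    field_simp
  rw [hrw, lt_div_iff₀ (by positivity : (0:ℝ) < 2 * c₂)]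
  nlinarith [hS]
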